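/- Fix sequences of integers a_t ≥ 1 and b_t (t ∈ ℕ). For a list μ = (n_1, …, n_k) of integers with 0 ≤ n_t < a_t for each t, define recursively φ(m, μ) ∈ ℤ and κ_m(μ) (a list of the same length) by: φ(m, ()) = m for the empty list (by convention φ(m, μ) is the value of m after processing all entries), and at stage t the pair (m, n_t) is replaced by (q_t, r_t) where m·b_t + n_t = q_t·a_t + r_t with 0 ≤ r_t < a_t; κ_m(μ) is the list (r_1, …, r_k) of produced remainders and φ(m, μ) is the final quotient. Then for all m₁, m₂ ∈ ℤ and every such list μ: φ(m₁ + m₂, μ) = φ(m₁, κ_{m₂}(μ)) + φ(m₂, μ), and κ_{m₁+m₂}(μ) = κ_{m₁}(κ_{m₂}(μ)). -/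
import Mathlib


/-- Process a list of edge indices `μ = (n_1, …, n_k)` starting at stage `t`
and with current group element `m`: at each stage the pair `(m, n_t)` is
replaced by the quotient/remainder pair `(q_t, r_t)` of the Euclidean
division `m * b_t + n_t = q_t * a_t + r_t`, `0 ≤ r_t < a_t`.  The result is
`(φ(m, μ), κ_m(μ))`: the final quotient together with the list of produced
remainders. -/
def selfSimRun (a b : ℕ → ℤ) : ℕ → ℤ → List ℤ → ℤ × List ℤ
  | _, m, [] => (m, [])
  | t, m, n :: ns =>
    let q := Int.ediv (m * b t + n) (a t)
    let r := Int.emod (m * b t + n) (a t)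
    let p := selfSimRun a b (t + 1) q ns
    (p.1, r :: p.2)

lemma selfSim_aux (a b : ℕ → ℤ) (ha : ∀ t, 1 ≤ a t) :
    ∀ (μ : List ℤ) (t : ℕ) (m₁ m₂ : ℤ),
    (selfSimRun a b t (m₁ + m₂) μ).1 =
      (selfSimRun a b t m₁ (selfSimRun a b t m₂ μ).2).1
        + (selfSimRun a b t m₂ μ).1 ∧
    (selfSimRun a b t (m₁ + m₂) μ).2 =
      (selfSimRun a b t m₁ (selfSimRun a b t m₂ μ).2).2 := by
  intro μ
  induction μ with
  | nil => intro t m₁ m₂; simp [selfSimRun]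
  | cons n ns ih =>
    intro t m₁ m₂
    have hat : a t ≠ 0 := by have := ha t; omega
    have key : (m₁ + m₂) * b t + n
        = (m₁ * b t + (m₂ * b t + n) % a t) + a t * ((m₂ * b t + n) / a t) := by
      have := Int.emod_add_mul_ediv (m₂ * b t + n) (a t)
      ring_nf
      linarith
    have hdiv : ((m₁ + m₂) * b t + n) / a t
        = (m₁ * b t + (m₂ * b t + n) % a t) / a t + (m₂ * b t + n) / a t := by
      rw [key, Int.add_mul_ediv_left _ _ hat]
    have hmod : ((m₁ + m₂) * b t + n) % a t
        = (m₁ * b t + (m₂ * b t + n) % a t) % a t := by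
      rw [key, Int.add_mul_emod_self_left]
    simp only [selfSimRun,
      show ∀ x y : ℤ, x.ediv y = x / y from fun _ _ => rfl,
      show ∀ x y : ℤ, x.emod y = x % y from fun _ _ => rfl, hdiv, hmod]
    obtain ⟨h1, h2⟩ := ih (t + 1) ((m₁ * b t + (m₂ * b t + n) % a t) / a t)
      ((m₂ * b t + n) / a t)
    exact ⟨by rw [h1], by rw [h2]⟩

/-- Path-level cocycle identity and group-action property (Section 3):
`φ(m₁ + m₂, μ) = φ(m₁, κ_{m₂}(μ)) + φ(m₂, μ)` and
`κ_{m₁+m₂}(μ) = κ_{m₁}(κ_{m₂}(μ))`. -/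
theorem selfSim_cocycle_identity (a b : ℕ → ℤ) (ha : ∀ t, 1 ≤ a t)
    (m₁ m₂ : ℤ) (μ : List ℤ)
    (hμ : ∀ i : Fin μ.length, 0 ≤ μ.get i ∧ μ.get i < a i) :
    (selfSimRun a b 0 (m₁ + m₂) μ).1 =
      (selfSimRun a b 0 m₁ (selfSimRun a b 0 m₂ μ).2).1
        + (selfSimRun a b 0 m₂ μ).1 ∧
    (selfSimRun a b 0 (m₁ + m₂) μ).2 =
      (selfSimRun a b 0 m₁ (selfSimRun a b 0 m₂ μ).2).2 := by
  exact selfSim_aux a b ha μ 0 m₁ m₂
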